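/- The LZ77 factorization of the k-th period-doubling sequence S_k is (S_0, Ŝ_0, Ŝ_1, …, Ŝ_{k-1}); in particular, the number of LZ77 phrases of S_k is k+1. -/
import Mathlib


/-- The morphism φ: a ↦ ab, b ↦ aa, with `false = a`, `true = b`. -/
def pdPhi (c : Bool) : List Bool := if c then [false, false] else [false, true]

/-- The k-th period-doubling sequence. -/
def pd : ℕ → List Bool
  | 0 => [false]
  | k + 1 => (pd k).flatMap pdPhi

/-- `hat w` : `w` with its last character flipped. -/
def hat (w : List Bool) : List Bool := w.dropLast ++ (w.getLast?.map Bool.not).toList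

/-- `ps` is the (greedy, non-overlapping) LZ77 factorization of `w`:
each phrase `p` with preceding text `pre` is such that `p.dropLast` is the longest
prefix of the remaining suffix occurring as a substring of `pre`
(the last phrase may instead be a suffix of `w` occurring in the preceding text). -/
def IsLZ77Fact (w : List Bool) (ps : List (List Bool)) : Prop :=
  ps.flatten = w ∧ (∀ p ∈ ps, p ≠ []) ∧
  ∀ i (h : i < ps.length),
    (ps.get ⟨i, h⟩).dropLast <:+: (ps.take i).flatten ∧
    ((ps.take i).flatten ++ ps.get ⟨i, h⟩ = w ∨
      ¬ (ps.get ⟨i, h⟩ <:+: (ps.take i).flatten))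

/-- `qs` is the (greedy) LZ-End factorization of `w`: each phrase `q` is such that
`q.dropLast` is the longest prefix of the remaining suffix occurring as a suffix of
`q_1 ⋯ q_j` for some earlier phrase boundary `j`
(the last phrase may instead be such a suffix in full). -/
def IsLZEndFact (w : List Bool) (qs : List (List Bool)) : Prop :=
  qs.flatten = w ∧ (∀ q ∈ qs, q ≠ []) ∧
  ∀ i (h : i < qs.length),
    (∃ t ≤ i, (qs.get ⟨i, h⟩).dropLast <:+ (qs.take t).flatten) ∧
    ((qs.take i).flatten ++ qs.get ⟨i, h⟩ = w ∨
      ¬ ∃ t ≤ i, qs.get ⟨i, h⟩ <:+ (qs.take t).flatten)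

lemma hat_concat (ys : List Bool) (c : Bool) : hat (ys ++ [c]) = ys ++ [!c] := by
  simp [hat]

lemma hat_append (A B : List Bool) (hB : B ≠ []) : hat (A ++ B) = A ++ hat B := by
  obtain ⟨zs, d, hd⟩ := B.eq_nil_or_concat.resolve_left hB
  rw [List.concat_eq_append] at hd
  rw [hd, ← List.append_assoc, hat_concat, hat_concat, List.append_assoc]

lemma hat_pdPhi (c : Bool) : hat (pdPhi c) = pdPhi (!c) := by
  cases c <;> simp [pdPhi, hat]

lemma pdPhi_ne_nil (c : Bool) : pdPhi c ≠ [] := by cases c <;> simp [pdPhi]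

lemma pd_ne_nil (k : ℕ) : pd k ≠ [] := by
  induction k with
  | zero => simp [pd]
  | succ k ih =>
    obtain ⟨x, t, hx⟩ := List.exists_cons_of_ne_nil ih
    simp only [pd, hx, List.flatMap_cons]
    cases x <;> simp [pdPhi]

lemma exists_concat (k : ℕ) : ∃ ys c, pd k = ys ++ [c] := by
  obtain ⟨ys, c, h⟩ := (pd k).eq_nil_or_concat.resolve_left (pd_ne_nil k)
  exact ⟨ys, c, by simpa [List.concat_eq_append] using h⟩

lemma pdPhi_flatMap_concat (ys : List Bool) (c : Bool) :
    (ys ++ [c]).flatMap pdPhi = ys.flatMap pdPhi ++ pdPhi c := by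
  simp

lemma pd_succ (k : ℕ) : pd (k + 1) = pd k ++ hat (pd k) := by
  induction k with
  | zero => simp [pd, pdPhi, hat]
  | succ k ih =>
    obtain ⟨ys, c, hc⟩ := exists_concat k
    have key : pd (k + 2) = (pd k).flatMap pdPhi ++ (hat (pd k)).flatMap pdPhi := by
      show (pd (k+1)).flatMap pdPhi = _
      rw [ih, List.flatMap_append]
    rw [key]
    have h1 : pd (k + 1) = (pd k).flatMap pdPhi := rfl
    rw [← h1]
    congr 1
    rw [hc, hat_concat, pdPhi_flatMap_concat, h1, hc, pdPhi_flatMap_concat,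
      hat_append _ _ (pdPhi_ne_nil c), hat_pdPhi]

lemma flatten_take (j : ℕ) :
    (pd 0 :: (List.range j).map (fun i => hat (pd i))).flatten = pd j := by
  induction j with
  | zero => simp [pd]
  | succ j ih =>
    rw [List.range_succ, List.map_append, pd_succ]
    simp only [List.flatten_cons] at ih ⊢
    simp [← ih]

lemma hat_ne (w : List Bool) (hw : w ≠ []) : hat w ≠ w := by
  obtain ⟨ys, c, rfl⟩ := w.eq_nil_or_concat.resolve_left (by simpa using hw)
  rw [List.concat_eq_append, hat_concat]
  intro h
  have := List.append_cancel_left h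
  simp at this

lemma hat_length (w : List Bool) (hw : w ≠ []) : (hat w).length = w.length := by
  obtain ⟨ys, c, rfl⟩ := w.eq_nil_or_concat.resolve_left (by simpa using hw)
  simp [List.concat_eq_append, hat_concat]

lemma hat_ne_nil (w : List Bool) (hw : w ≠ []) : hat w ≠ [] := by
  obtain ⟨ys, c, rfl⟩ := w.eq_nil_or_concat.resolve_left (by simpa using hw)
  simp [List.concat_eq_append, hat_concat]

lemma hat_dropLast (w : List Bool) (hw : w ≠ []) : (hat w).dropLast = w.dropLast := by
  obtain ⟨ys, c, rfl⟩ := w.eq_nil_or_concat.resolve_left (by simpa using hw)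
  simp [List.concat_eq_append, hat_concat]

/-- The LZ77 factorization of `S_k` is `(S_0, Ŝ_0, Ŝ_1, …, Ŝ_{k-1})`,
which has `k + 1` phrases. -/
theorem pd_lz77 (k : ℕ) :
    IsLZ77Fact (pd k) (pd 0 :: (List.range k).map (fun i => hat (pd i))) ∧
    (pd 0 :: (List.range k).map (fun i => hat (pd i))).length = k + 1 := by
  refine ⟨⟨flatten_take k, ?_, ?_⟩, by simp⟩
  · intro p hp
    rcases List.mem_cons.mp hp with hp | hp
    · simp [hp, pd]
    · simp only [List.mem_map, List.mem_range] at hp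
      obtain ⟨i, _, rfl⟩ := hp
      exact hat_ne_nil _ (pd_ne_nil i)
  · intro i h
    simp only [List.length_cons, List.length_map, List.length_range] at h
    match i with
    | 0 =>
      refine ⟨by simp [pd], Or.inr ?_⟩
      intro hinf
      have : pd 0 = ([] : List Bool) := List.eq_nil_of_infix_nil (by simpa using hinf)
      simp [pd] at this
    | j + 1 =>
      have hjk : j < k := by omega
      have htake : ((pd 0 :: (List.range k).map (fun i => hat (pd i))).take (j+1)).flatten
          = pd j := by
        rw [List.take_succ_cons, ← List.map_take, List.take_range, min_eq_left hjk.le]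
        exact flatten_take j
      have hget : (pd 0 :: (List.range k).map (fun i => hat (pd i))).get
          ⟨j+1, by simpa using h⟩ = hat (pd j) := by
        simp [List.get_cons_succ, List.getElem_map]
      rw [htake, hget]
      constructor
      · rw [hat_dropLast _ (pd_ne_nil j)]
        exact (List.dropLast_prefix (pd j)).isInfix
      · right
        intro hinf
        have heq : hat (pd j) = pd j :=
          hinf.sublist.eq_of_length (hat_length _ (pd_ne_nil j))
        exact hat_ne _ (pd_ne_nil j) heq
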